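/- Let N and k be even positive integers with k ≤ N - 2. Then the number of symmetric spines in S_{N,k}, the number of symmetric spines in S_{N,(k-1)}, and the number of symmetric spines in S_{(N-1),(k-1)} are all equal to the binomial coefficient C(N/2 - 2, k/2 - 1). -/

import Mathlib

/-- The spine class `S_{N,k}`: tuples of `k` nonnegative integers summing to `N - k - 2`. -/
def spineClass (N k : ℕ) : Finset (Fin k → ℕ) :=
  Finset.Nat.antidiagonalTuple k (N - k - 2)

/-- The symmetric (palindromic) spines in `S_{N,k}`: the fixed points of the
reversal action of `ℤ/2` (i.e. `s i = s (k - 1 - i)` for all `i`, 0-indexed). -/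
def symSpines (N k : ℕ) : Finset (Fin k → ℕ) :=
  (spineClass N k).filter (fun s => ∀ i, s i = s i.rev)

/-- The number of orbits of `S_{N,k}` under the reversal action of `ℤ/2`:
each orbit is recorded as the (unordered) pair `{s, s ∘ rev}`. -/
def orbitCount (N k : ℕ) : ℕ :=
  ((spineClass N k).image (fun s => ({s, s ∘ Fin.rev} : Finset (Fin k → ℕ)))).card

namespace SymSpineAux

open Finset Finset.Nat

lemma sum_rev {n : ℕ} (f : Fin n → ℕ) : ∑ i : Fin n, f i.rev = ∑ i : Fin n, f i :=
  Function.Bijective.sum_comp Fin.rev_involutive.bijective f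

lemma rev_castAdd_even {m : ℕ} (j : Fin m) :
    (Fin.castAdd m j : Fin (m + m)).rev = Fin.natAdd m j.rev := by
  have := j.is_lt
  ext
  simp only [Fin.val_rev, Fin.coe_castAdd, Fin.coe_natAdd]
  omega

lemma rev_natAdd_even {m : ℕ} (j : Fin m) :
    (Fin.natAdd m j : Fin (m + m)).rev = Fin.castAdd m j.rev := by
  have := j.is_lt
  ext
  simp only [Fin.val_rev, Fin.coe_castAdd, Fin.coe_natAdd]
  omega

lemma rev_natAdd_odd {m : ℕ} (j : Fin m) :
    (Fin.natAdd (m + 1) j : Fin (m + 1 + m)).rev = Fin.castAdd m j.rev.castSucc := by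
  have := j.is_lt
  ext
  simp only [Fin.val_rev, Fin.coe_castAdd, Fin.coe_natAdd, Fin.coe_castSucc]
  omega

lemma rev_castAdd_odd {m : ℕ} (j : Fin m) :
    (Fin.castAdd m j.castSucc : Fin (m + 1 + m)).rev = Fin.natAdd (m + 1) j.rev := by
  have := j.is_lt
  ext
  simp only [Fin.val_rev, Fin.coe_castAdd, Fin.coe_natAdd, Fin.coe_castSucc]
  omega

lemma rev_mid_odd {m : ℕ} :
    (Fin.castAdd m (Fin.last m) : Fin (m + 1 + m)).rev = Fin.castAdd m (Fin.last m) := by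
  ext
  simp only [Fin.val_rev, Fin.coe_castAdd, Fin.val_last]
  omega

/-- The number of symmetric tuples of even length `m + m` with even sum `T + T`
equals the number of tuples of length `m` with sum `T`. -/
lemma card_sym_even (m T : ℕ) :
    ((antidiagonalTuple (m + m) (T + T)).filter (fun s => ∀ i, s i = s i.rev)).card
      = (antidiagonalTuple m T).card := by
  refine Finset.card_bij' (fun s _ => fun j : Fin m => s (Fin.castAdd m j))
    (fun t _ => Fin.append t (t ∘ Fin.rev)) ?hi ?hj ?li ?ri
  case hi =>
    intro s hs
    rw [Finset.mem_filter, mem_antidiagonalTuple] at hs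
    obtain ⟨hsum, hsym⟩ := hs
    rw [mem_antidiagonalTuple]
    rw [Fin.sum_univ_add] at hsum
    have h2 : ∑ j : Fin m, s (Fin.natAdd m j) = ∑ j : Fin m, s (Fin.castAdd m j) := by
      calc ∑ j : Fin m, s (Fin.natAdd m j)
          = ∑ j : Fin m, s (Fin.castAdd m j.rev) := by
            refine Finset.sum_congr rfl fun j _ => ?_
            rw [hsym (Fin.natAdd m j), rev_natAdd_even]
        _ = ∑ j : Fin m, s (Fin.castAdd m j) := sum_rev (fun j => s (Fin.castAdd m j))
    omega
  case hj =>
    intro t ht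
    rw [mem_antidiagonalTuple] at ht
    rw [Finset.mem_filter, mem_antidiagonalTuple]
    constructor
    · rw [Fin.sum_univ_add]
      simp only [Fin.append_left, Fin.append_right, Function.comp_apply]
      rw [sum_rev t, ht]
    · intro i
      induction i using Fin.addCases with
      | left j =>
        rw [rev_castAdd_even]
        simp only [Fin.append_left, Fin.append_right, Function.comp_apply, Fin.rev_rev]
      | right j =>
        rw [rev_natAdd_even]
        simp only [Fin.append_left, Fin.append_right, Function.comp_apply]
  case li =>
    intro s hs
    rw [Finset.mem_filter] at hs
    obtain ⟨-, hsym⟩ := hs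
    funext i
    induction i using Fin.addCases with
    | left j => simp only [Fin.append_left]
    | right j =>
      simp only [Fin.append_right, Function.comp_apply]
      rw [← rev_natAdd_even, ← hsym]
  case ri =>
    intro t _
    funext j
    simp only [Fin.append_left]

/-- The number of symmetric tuples of odd length `m + 1 + m` with sum `S`
equals the number of tuples of length `m + 1` with sum `S / 2`. -/
lemma card_sym_odd (m S : ℕ) :
    ((antidiagonalTuple (m + 1 + m) S).filter (fun s => ∀ i, s i = s i.rev)).card
      = (antidiagonalTuple (m + 1) (S / 2)).card := by
  refine Finset.card_bij'
    (fun s _ => Fin.snoc (fun j : Fin m => s (Fin.castAdd m j.castSucc))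
      (s (Fin.castAdd m (Fin.last m)) / 2))
    (fun u _ => Fin.append
      (Fin.snoc (fun j : Fin m => u j.castSucc) (2 * u (Fin.last m) + S % 2))
      ((fun j : Fin m => u j.castSucc) ∘ Fin.rev)) ?hi ?hj ?li ?ri
  case hi =>
    intro s hs
    rw [Finset.mem_filter, mem_antidiagonalTuple] at hs
    obtain ⟨hsum, hsym⟩ := hs
    rw [mem_antidiagonalTuple]
    rw [Fin.sum_univ_add, Fin.sum_univ_castSucc] at hsum
    have h2 : ∑ j : Fin m, s (Fin.natAdd (m + 1) j)
        = ∑ j : Fin m, s (Fin.castAdd m j.castSucc) := by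
      calc ∑ j : Fin m, s (Fin.natAdd (m + 1) j)
          = ∑ j : Fin m, s (Fin.castAdd m j.rev.castSucc) := by
            refine Finset.sum_congr rfl fun j _ => ?_
            rw [hsym (Fin.natAdd (m + 1) j), rev_natAdd_odd]
        _ = ∑ j : Fin m, s (Fin.castAdd m j.castSucc) :=
            sum_rev (fun j => s (Fin.castAdd m j.castSucc))
    rw [Fin.sum_univ_castSucc]
    simp only [Fin.snoc_castSucc, Fin.snoc_last]
    omega
  case hj =>
    intro u hu
    rw [mem_antidiagonalTuple, Fin.sum_univ_castSucc] at hu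
    rw [Finset.mem_filter, mem_antidiagonalTuple]
    constructor
    · rw [Fin.sum_univ_add]
      simp only [Fin.append_left, Fin.append_right, Function.comp_apply]
      rw [Fin.sum_univ_castSucc]
      simp only [Fin.snoc_castSucc, Fin.snoc_last]
      rw [sum_rev (fun j : Fin m => u j.castSucc)]
      have := Nat.mod_two_eq_zero_or_one S
      omega
    · intro i
      induction i using Fin.addCases with
      | left j =>
        induction j using Fin.lastCases with
        | last => rw [rev_mid_odd]
        | cast j =>
          rw [rev_castAdd_odd]
          simp only [Fin.append_left, Fin.append_right, Fin.snoc_castSucc,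
            Function.comp_apply, Fin.rev_rev]
      | right j =>
        rw [rev_natAdd_odd]
        simp only [Fin.append_left, Fin.append_right, Fin.snoc_castSucc,
          Function.comp_apply]
  case li =>
    intro s hs
    rw [Finset.mem_filter, mem_antidiagonalTuple] at hs
    obtain ⟨hsum, hsym⟩ := hs
    have hmid : s (Fin.castAdd m (Fin.last m)) % 2 = S % 2 := by
      rw [Fin.sum_univ_add, Fin.sum_univ_castSucc] at hsum
      have h2 : ∑ j : Fin m, s (Fin.natAdd (m + 1) j)
          = ∑ j : Fin m, s (Fin.castAdd m j.castSucc) := by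
        calc ∑ j : Fin m, s (Fin.natAdd (m + 1) j)
            = ∑ j : Fin m, s (Fin.castAdd m j.rev.castSucc) := by
              refine Finset.sum_congr rfl fun j _ => ?_
              rw [hsym (Fin.natAdd (m + 1) j), rev_natAdd_odd]
          _ = ∑ j : Fin m, s (Fin.castAdd m j.castSucc) :=
              sum_rev (fun j => s (Fin.castAdd m j.castSucc))
      omega
    funext i
    induction i using Fin.addCases with
    | left j =>
      induction j using Fin.lastCases with
      | last =>
        simp only [Fin.append_left, Fin.snoc_last]
        omega
      | cast j =>
        simp only [Fin.append_left, Fin.snoc_castSucc]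
    | right j =>
      simp only [Fin.append_right, Function.comp_apply, Fin.snoc_castSucc]
      rw [← rev_natAdd_odd, ← hsym]
  case ri =>
    intro u _
    funext j
    induction j using Fin.lastCases with
    | last =>
      simp only [Fin.snoc_last, Fin.append_left]
      have := Nat.mod_two_eq_zero_or_one S
      omega
    | cast j =>
      simp only [Fin.snoc_castSucc, Fin.append_left]

lemma adt_succ_eq (k n : ℕ) :
    antidiagonalTuple (k + 1) n
      = (Finset.range (n + 1)).biUnion
          (fun i => (antidiagonalTuple k (n - i)).image (Fin.cons i)) := by
  ext x
  simp only [mem_antidiagonalTuple, Finset.mem_biUnion, Finset.mem_range, Finset.mem_image]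
  constructor
  · intro hx
    rw [Fin.sum_univ_succ] at hx
    refine ⟨x 0, by omega, Fin.tail x, ?_, Fin.cons_self_tail x⟩
    simp only [Fin.tail]
    omega
  · rintro ⟨i, hi, t, ht, rfl⟩
    rw [Fin.sum_cons, ht]
    omega

lemma adt_card (p : ℕ) : ∀ n, (antidiagonalTuple (p + 1) n).card = (n + p).choose p := by
  induction p with
  | zero => intro n; rw [antidiagonalTuple_one]; simp
  | succ p ih =>
    intro n
    have hinj : ∀ i : ℕ, Function.Injective (fun t : Fin (p + 1) → ℕ => Fin.cons (α := fun _ => ℕ) i t) := by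
      intro i t₁ t₂ h
      funext j
      simpa using congrFun h j.succ
    have hdisj : ∀ a ∈ Finset.range (n + 1), ∀ b ∈ Finset.range (n + 1), a ≠ b →
        Disjoint
          ((antidiagonalTuple (p + 1) (n - a)).image (Fin.cons (α := fun _ => ℕ) a))
          ((antidiagonalTuple (p + 1) (n - b)).image (Fin.cons (α := fun _ => ℕ) b)) := by
      intro a _ b _ hab
      rw [Finset.disjoint_left]
      rintro x hxa hxb
      rw [Finset.mem_image] at hxa hxb
      obtain ⟨t, -, rfl⟩ := hxa
      obtain ⟨t', -, h⟩ := hxb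
      apply hab
      have := congrFun h 0
      simpa using this.symm
    rw [adt_succ_eq, Finset.card_biUnion hdisj]
    have h1 : ∀ i ∈ Finset.range (n + 1),
        ((antidiagonalTuple (p + 1) (n - i)).image (Fin.cons (α := fun _ => ℕ) i)).card
          = (n - i + p).choose p := by
      intro i _
      rw [Finset.card_image_of_injective _ (hinj i), ih]
    rw [Finset.sum_congr rfl h1, ← Finset.sum_range_reflect]
    have h2 : ∀ i ∈ Finset.range (n + 1),
        (n - (n + 1 - 1 - i) + p).choose p = (i + p).choose p := by
      intro i hi
      rw [Finset.mem_range] at hi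
      congr 2
      omega
    rw [Finset.sum_congr rfl h2, Nat.sum_range_add_choose n p]
    rfl

end SymSpineAux

/-- For even positive `N, k` with `k ≤ N - 2`, the numbers of symmetric spines in
`S_{N,k}`, in `S_{N,k-1}`, and in `S_{N-1,k-1}` are all equal to `C(N/2 - 2, k/2 - 1)`. -/
theorem symSpines_card_even (N k : ℕ) (hNe : Even N) (hke : Even k)
    (hN : 0 < N) (hk : 0 < k) (hkN : k ≤ N - 2) :
    (symSpines N k).card = Nat.choose (N / 2 - 2) (k / 2 - 1) ∧
    (symSpines N (k - 1)).card = Nat.choose (N / 2 - 2) (k / 2 - 1) ∧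
    (symSpines (N - 1) (k - 1)).card = Nat.choose (N / 2 - 2) (k / 2 - 1) := by
  obtain ⟨n, rfl⟩ := hNe
  obtain ⟨m, rfl⟩ := hke
  have hm : 0 < m := by omega
  obtain ⟨p, rfl⟩ := Nat.exists_eq_succ_of_ne_zero hm.ne'
  have hpn : p + 2 ≤ n := by omega
  have hchoose : (n + n) / 2 - 2 = n - 2 := by omega
  have hhalf : (p + 1 + (p + 1)) / 2 - 1 = p := by omega
  rw [hchoose, hhalf]
  refine ⟨?_, ?_, ?_⟩
  · show ((Finset.Nat.antidiagonalTuple (p + 1 + (p + 1)) (n + n - (p + 1 + (p + 1)) - 2)).filter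
        (fun s => ∀ i, s i = s i.rev)).card = (n - 2).choose p
    rw [show n + n - (p + 1 + (p + 1)) - 2 = (n - p - 2) + (n - p - 2) by omega]
    rw [SymSpineAux.card_sym_even (p + 1) (n - p - 2), SymSpineAux.adt_card p (n - p - 2)]
    congr 1
    omega
  · show ((Finset.Nat.antidiagonalTuple (p + 1 + p) (n + n - (p + 1 + p) - 2)).filter
        (fun s => ∀ i, s i = s i.rev)).card = (n - 2).choose p
    rw [SymSpineAux.card_sym_odd p (n + n - (p + 1 + p) - 2),
      show (n + n - (p + 1 + p) - 2) / 2 = n - p - 2 by omega,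
      SymSpineAux.adt_card p (n - p - 2)]
    congr 1
    omega
  · show ((Finset.Nat.antidiagonalTuple (p + 1 + p) (n + n - 1 - (p + 1 + p) - 2)).filter
        (fun s => ∀ i, s i = s i.rev)).card = (n - 2).choose p
    rw [SymSpineAux.card_sym_odd p (n + n - 1 - (p + 1 + p) - 2),
      show (n + n - 1 - (p + 1 + p) - 2) / 2 = n - p - 2 by omega,
      SymSpineAux.adt_card p (n - p - 2)]
    congr 1
    omega
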